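/- For the same system, L_g L_f h(x) = 0, i.e. the second derivative of the output still does not depend on the input. -/

import Mathlib

/-- With L_f h(x) = T_sup·x_v·√(p_sup − p_L − α·p_lp), the Lie
derivative L_g L_f h(x) = ∇(L_f h)(x)·g vanishes, so the second derivative
of the output does not depend on the input. -/
theorem stmt2 (T_L T_sup D ω K α p_lp : ℝ)
    (Lfh : (Fin 4 → ℝ) → ℝ)
    (hLfh : Lfh = fun x => T_sup * x 3 * Real.sqrt (x 1 - x 0 - α * p_lp))
    (g : Fin 4 → ℝ) (hg : g = ![0, 0, ω^2 * K, 0]) :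
    ∀ x : Fin 4 → ℝ, x 1 - x 0 - α * p_lp > 0 →
      fderiv ℝ Lfh x g = 0 := by
  intro x hx
  set π : Fin 4 → ((Fin 4 → ℝ) →L[ℝ] ℝ) := fun i => ContinuousLinearMap.proj i with hπ
  have hu : HasFDerivAt (fun y : Fin 4 → ℝ => y 1 - y 0 - α * p_lp)
      (π 1 - π 0) x := by
    have h1 : HasFDerivAt (fun y : Fin 4 → ℝ => y 1) (π 1) x := hasFDerivAt_apply 1 x
    have h0 : HasFDerivAt (fun y : Fin 4 → ℝ => y 0) (π 0) x := hasFDerivAt_apply 0 x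
    simpa using (h1.sub h0).sub_const (α * p_lp)
  have hsqrt : HasFDerivAt (fun y : Fin 4 → ℝ => Real.sqrt (y 1 - y 0 - α * p_lp))
      ((1 / (2 * Real.sqrt (x 1 - x 0 - α * p_lp))) • (π 1 - π 0)) x := by
    have := (Real.hasDerivAt_sqrt (ne_of_gt hx)).comp_hasFDerivAt x hu
    simpa [Function.comp_def] using this
  have h3 : HasFDerivAt (fun y : Fin 4 → ℝ => T_sup * y 3) (T_sup • π 3) x :=
    (hasFDerivAt_apply 3 x).const_mul T_sup
  have hL : HasFDerivAt Lfh
      ((T_sup * x 3) • ((1 / (2 * Real.sqrt (x 1 - x 0 - α * p_lp))) • (π 1 - π 0))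
        + Real.sqrt (x 1 - x 0 - α * p_lp) • (T_sup • π 3)) x := by
    rw [hLfh]
    exact h3.mul hsqrt
  rw [hL.fderiv]
  have e0 : g 0 = 0 := by rw [hg]; rfl
  have e1 : g 1 = 0 := by rw [hg]; rfl
  have e3 : g 3 = 0 := by rw [hg]; rfl
  simp [π, e0, e1, e3]
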